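/- Let X be a metrizable, second countable topological space with its Borel σ-algebra, and equip the space of probability measures on X with the σ-algebra generated by the evaluation maps μ ↦ μ(A). Then the set of discrete probability measures, i.e. the set of probability measures μ on X for which there exists a countable set S ⊆ X with μ(X \ S) = 0, is a measurable subset of the space of probability measures. -/

import Mathlib

open MeasureTheory

open Set Filter Topology
open scoped ENNReal

/-- On a metrizable second-countable space with its Borel σ-algebra, the set of discrete
probability measures (those carried by some countable set) is a measurable subset of the
space of probability measures, the latter carrying the σ-algebra induced from the
σ-algebra on measures generated by the evaluation maps. -/
theorem measurableSet_discrete_probabilityMeasures {X : Type*} [TopologicalSpace X]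
    [TopologicalSpace.MetrizableSpace X] [SecondCountableTopology X]
    [MeasurableSpace X] [BorelSpace X] :
    MeasurableSet {μ : {ν : Measure X // IsProbabilityMeasure ν} |
      ∃ S : Set X, S.Countable ∧ (μ : Measure X) (Set.univ \ S) = 0} := by
  classical
  -- a countable family of open sets forming a basis
  obtain ⟨B, hBc, -, hB⟩ := TopologicalSpace.exists_countable_basis X
  obtain ⟨u, hu⟩ : ∃ u : ℕ → Set X, insert ∅ B = Set.range u :=
    (hBc.insert ∅).exists_eq_range (insert_nonempty _ _)
  have huopen : ∀ n, IsOpen (u n) := by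
    intro n
    have : u n ∈ insert ∅ B := hu ▸ mem_range_self n
    rcases this with h | h
    · simp [h]
    · exact hB.isOpen h
  have humem : ∀ s ∈ B, ∃ n, u n = s := by
    intro s hs
    have : s ∈ insert ∅ B := mem_insert_of_mem _ hs
    rw [hu] at this
    exact this.imp fun n hn => hn
  set f : X → ℕ → Bool := fun x n => if x ∈ u n then true else false with hf
  have hfmem : ∀ x n, f x n = true ↔ x ∈ u n := by
    intro x n; by_cases h : x ∈ u n <;> simp [hf, h]
  have hfinj : Function.Injective f := by
    intro x y hxy
    by_contra hne
    obtain ⟨t, htB, hxt, hty⟩ := hB.exists_subset_of_mem_open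
      (show x ∈ ({y}ᶜ : Set X) from hne) isOpen_compl_singleton
    obtain ⟨n, rfl⟩ := humem t htB
    have h1 : f x n = true := (hfmem x n).2 hxt
    have h2 : f y n = false := by
      have : y ∉ u n := fun h => hty h rfl
      simp [hf, this]
    rw [hxy] at h1; rw [h1] at h2; exact Bool.noConfusion h2
  have hmeasf : ∀ n, Measurable fun x => f x n := by
    intro n
    apply measurable_to_countable'
    intro b
    cases b
    · have : (fun x => f x n) ⁻¹' {false} = (u n)ᶜ := by
        ext x; simp [hfmem, hf]
      rw [this]; exact (huopen n).measurableSet.compl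
    · have : (fun x => f x n) ⁻¹' {true} = u n := by
        ext x; simp [hfmem]
      rw [this]; exact (huopen n).measurableSet
  set E : (j : ℕ) → (Fin j → Bool) → Set X := fun j b => {x | ∀ i : Fin j, f x i = b i}
    with hE
  have hEmeas : ∀ j b, MeasurableSet (E j b) := by
    intro j b
    have : E j b = ⋂ i : Fin j, (fun x => f x (i : ℕ)) ⁻¹' {b i} := by
      ext x; simp [hE]
    rw [this]
    exact MeasurableSet.iInter fun i => (hmeasf i) (measurableSet_singleton _)
  -- the key characterization
  have key : ∀ μ : Measure X, IsProbabilityMeasure μ →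
      ((∃ S : Set X, S.Countable ∧ μ (Set.univ \ S) = 0) ↔
        ∀ k : ℕ, ∃ m : ℕ, ∀ j : ℕ, ∃ T : Finset (Fin j → Bool),
          T.card ≤ m ∧ 1 - ((k : ℝ≥0∞) + 1)⁻¹ < μ (⋃ b ∈ T, E j b)) := by
    intro μ hμ
    constructor
    · rintro ⟨S, hSc, hS0⟩ k
      -- μ S = 1
      have hS1 : 1 ≤ μ S := by
        have : (univ : Set X) ⊆ S ∪ (univ \ S) := by
          intro x _; by_cases h : x ∈ S
          · exact Or.inl h
          · exact Or.inr ⟨trivial, h⟩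
        calc (1 : ℝ≥0∞) = μ univ := (measure_univ (μ := μ)).symm
          _ ≤ μ (S ∪ (univ \ S)) := measure_mono this
          _ ≤ μ S + μ (univ \ S) := measure_union_le _ _
          _ = μ S := by rw [hS0, add_zero]
      have htsum : 1 ≤ ∑' x : S, μ {(x : X)} := by
        refine hS1.trans ?_
        calc μ S = μ (⋃ x ∈ S, {x}) := by rw [Set.biUnion_of_singleton]
          _ ≤ ∑' x : S, μ {(x : X)} := measure_biUnion_le μ hSc _
      have hlt : 1 - ((k : ℝ≥0∞) + 1)⁻¹ < ∑' x : S, μ {(x : X)} := by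
        refine lt_of_lt_of_le ?_ htsum
        apply ENNReal.sub_lt_self ENNReal.one_ne_top one_ne_zero
        simp
      rw [ENNReal.tsum_eq_iSup_sum] at hlt
      rw [lt_iSup_iff] at hlt
      obtain ⟨F, hF⟩ := hlt
      set F' : Finset X := F.image Subtype.val with hF'
      have hsum' : ∑ x ∈ F', μ {x} = ∑ p ∈ F, μ {(p : X)} :=
        Finset.sum_image (fun a _ b _ h => Subtype.val_injective h)
      have hμF' : 1 - ((k : ℝ≥0∞) + 1)⁻¹ < μ (F' : Set X) := by
        have : μ (F' : Set X) = ∑ x ∈ F', μ {x} := by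
          have hdisj : (F' : Set X).PairwiseDisjoint (fun x => ({x} : Set X)) := by
            intro a _ b _ hab
            simp [Set.disjoint_singleton, hab]
          have heq := measure_biUnion_finset (μ := μ) hdisj
            (fun x _ => measurableSet_singleton x)
          have hcov : ⋃ b ∈ F', ({b} : Set X) = (F' : Set X) := by ext w; simp
          rw [← hcov, heq]
        rw [this, hsum']; exact hF
      refine ⟨F'.card, fun j => ?_⟩
      refine ⟨F'.image (fun x (i : Fin j) => f x i), Finset.card_image_le, ?_⟩
      refine lt_of_lt_of_le hμF' (measure_mono ?_)
      intro x hx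
      simp only [Finset.mem_coe] at hx
      exact Set.mem_biUnion (Finset.mem_image_of_mem (fun x (i : Fin j) => f x (i : ℕ)) hx)
        (show x ∈ E j (fun i => f x (i : ℕ)) from fun i => rfl)
    · intro hyp
      set A : Set X := {x | μ {x} ≠ 0} with hA
      have hAc : A.Countable := by
        have := Measure.countable_meas_pos_of_disjoint_iUnion
          (μ := μ) (As := fun x : X => {x})
          (fun x => measurableSet_singleton x)
          (fun x y hxy => by simp [Function.onFun, Set.disjoint_singleton, hxy])
        refine this.mono ?_
        intro x hx
        simpa [pos_iff_ne_zero, hA] using hx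
      refine ⟨A, hAc, ?_⟩
      rw [← Set.compl_eq_univ_diff]
      by_contra ht0
      have hAm : MeasurableSet A := hAc.measurableSet
      set ν : Measure X := μ.restrict Aᶜ with hν
      have hνx : ∀ x, ν {x} = 0 := by
        intro x
        rw [hν, Measure.restrict_apply (measurableSet_singleton x)]
        by_cases hx : x ∈ A
        · have : ({x} : Set X) ∩ Aᶜ = ∅ := by
            ext y; simp only [mem_inter_iff, mem_singleton_iff, mem_compl_iff, mem_empty_iff_false,
              iff_false]
            rintro ⟨rfl, h⟩; exact h hx
          rw [this, measure_empty]
        · have h0 : μ {x} = 0 := by simpa [hA] using hx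
          exact le_antisymm (le_trans (measure_mono Set.inter_subset_left) h0.le) zero_le
      set t : ℝ≥0∞ := μ Aᶜ with htdef
      have htpos : t ≠ 0 := ht0
      obtain ⟨n, hn⟩ := ENNReal.exists_inv_nat_lt htpos
      have hkn : ((n : ℝ≥0∞) + 1)⁻¹ < t := lt_of_le_of_lt (by
        apply ENNReal.inv_le_inv.mpr
        exact le_self_add) hn
      obtain ⟨m, hm⟩ := hyp n
      have hmpos : m ≠ 0 := by
        rintro rfl
        obtain ⟨T, hTcard, hT⟩ := hm 0
        have : T = ∅ := Finset.card_eq_zero.mp (le_antisymm hTcard zero_le)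
        rw [this] at hT
        simp only [Finset.notMem_empty, Set.iUnion_of_empty, Set.iUnion_empty,
          measure_empty] at hT
        -- hT : 1 - (n+1)⁻¹ < 0
        exact (not_lt_of_ge zero_le) hT
      set δ : ℝ≥0∞ := t - ((n : ℝ≥0∞) + 1)⁻¹ with hδ
      have hδpos : δ ≠ 0 := by
        rw [hδ]; exact (tsub_pos_of_lt hkn).ne'
      set c : ℝ≥0∞ := δ / m with hc
      have hcpos : 0 < c := ENNReal.div_pos hδpos (ENNReal.natCast_ne_top m)
      have hμA : μ A = 1 - t := by
        have := measure_add_measure_compl (μ := μ) hAm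
        rw [measure_univ] at this
        exact ENNReal.eq_sub_of_add_eq' ENNReal.one_ne_top this
      -- for every depth j there is a cylinder with ν-measure at least c
      have hcyl : ∀ j : ℕ, ∃ b : Fin j → Bool, c ≤ ν (E j b) := by
        intro j
        obtain ⟨T, hTcard, hT⟩ := hm j
        have hUm : MeasurableSet (⋃ b ∈ T, E j b) :=
          MeasurableSet.biUnion T.countable_toSet (fun b _ => hEmeas j b)
        have hνU : δ < ν (⋃ b ∈ T, E j b) := by
          have h1 : μ (⋃ b ∈ T, E j b) ≤ ν (⋃ b ∈ T, E j b) + μ A := by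
            rw [hν, Measure.restrict_apply hUm]
            calc μ (⋃ b ∈ T, E j b)
                ≤ μ ((⋃ b ∈ T, E j b) ∩ Aᶜ) + μ ((⋃ b ∈ T, E j b) \ Aᶜ) :=
                  measure_le_inter_add_diff _ _ _
              _ ≤ μ ((⋃ b ∈ T, E j b) ∩ Aᶜ) + μ A := by
                  gcongr
                  intro x hx
                  simpa using hx.2
          have h2 : 1 < ν (⋃ b ∈ T, E j b) + μ A + ((n : ℝ≥0∞) + 1)⁻¹ := by
            have := lt_of_lt_of_le hT h1
            calc (1 : ℝ≥0∞) ≤ 1 - ((n : ℝ≥0∞) + 1)⁻¹ + ((n : ℝ≥0∞) + 1)⁻¹ :=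
              le_tsub_add
              _ < ν (⋃ b ∈ T, E j b) + μ A + ((n : ℝ≥0∞) + 1)⁻¹ :=
                ENNReal.add_lt_add_right (ENNReal.inv_ne_top.mpr (by simp)) this
          rw [hμA] at h2
          have ht1 : t ≤ 1 := by
            rw [htdef]; exact prob_le_one
          have h3 : 1 + t < ν (⋃ b ∈ T, E j b) + ((n : ℝ≥0∞) + 1)⁻¹ + 1 := by
            calc 1 + t < (ν (⋃ b ∈ T, E j b) + (1 - t) + ((n : ℝ≥0∞) + 1)⁻¹) + t :=
                  ENNReal.add_lt_add_right (ne_top_of_le_ne_top ENNReal.one_ne_top ht1) h2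
              _ = ν (⋃ b ∈ T, E j b) + ((n : ℝ≥0∞) + 1)⁻¹ + ((1 - t) + t) := by ring
              _ = ν (⋃ b ∈ T, E j b) + ((n : ℝ≥0∞) + 1)⁻¹ + 1 := by
                  rw [tsub_add_cancel_of_le ht1]
          have h4 : t < ν (⋃ b ∈ T, E j b) + ((n : ℝ≥0∞) + 1)⁻¹ := by
            rw [add_comm 1 t] at h3
            exact (ENNReal.add_lt_add_iff_right ENNReal.one_ne_top).mp h3
          rw [hδ]
          exact (ENNReal.sub_lt_iff_lt_right (ENNReal.inv_ne_top.mpr (by simp)) hkn.le).mpr h4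
        by_contra hcon
        push_neg at hcon
        have : ν (⋃ b ∈ T, E j b) ≤ δ := by
          calc ν (⋃ b ∈ T, E j b) ≤ ∑ b ∈ T, ν (E j b) :=
              measure_biUnion_finset_le _ _
            _ ≤ ∑ _b ∈ T, c := Finset.sum_le_sum (fun b hb => (hcon b).le) -- hcon needs membership?
            _ = T.card * c := by rw [Finset.sum_const, nsmul_eq_mul]
            _ ≤ m * c := mul_le_mul_left (by exact_mod_cast hTcard) c
            _ = δ := by
                rw [hc, ENNReal.mul_div_cancel (by exact_mod_cast hmpos) (ENNReal.natCast_ne_top m)]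
        exact absurd this (not_le_of_gt hνU)
      choose bseq hbseq using hcyl
      -- extend each cylinder choice to a full sequence
      set y : ℕ → (ℕ → Bool) := fun j i => if h : i < j then bseq j ⟨i, h⟩ else false with hy
      obtain ⟨x, φ, hφ, hconv⟩ := SeqCompactSpace.tendsto_subseq y
      -- for every depth d, ν (E d (x restricted)) ≥ c
      have hdepth : ∀ d : ℕ, c ≤ ν (E d (fun i : Fin d => x i)) := by
        intro d
        have hcoord : ∀ i : Fin d, ∀ᶠ nn in atTop, y (φ nn) (i : ℕ) = x i := by
          intro i
          have h1 : Tendsto (fun nn => y (φ nn) (i : ℕ)) atTop (𝓝 (x i)) :=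
            (tendsto_pi_nhds.mp hconv) i
          rw [nhds_discrete] at h1
          exact tendsto_pure.mp h1
        have hall : ∀ᶠ nn in atTop, (∀ i : Fin d, y (φ nn) (i : ℕ) = x i) ∧ d ≤ φ nn := by
          refine Filter.Eventually.and ?_ ?_
          · exact (Filter.eventually_all.mpr hcoord)
          · filter_upwards [Filter.eventually_ge_atTop d] with nn hnn
            exact le_trans hnn (hφ.le_apply)
        obtain ⟨nn, hnn1, hnn2⟩ := hall.exists
        refine le_trans (hbseq (φ nn)) (measure_mono ?_)
        intro z hz
        intro i
        have hi : (i : ℕ) < φ nn := lt_of_lt_of_le i.2 hnn2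
        have := hz ⟨i, hi⟩
        calc f z (i : ℕ) = bseq (φ nn) ⟨i, hi⟩ := this
          _ = y (φ nn) (i : ℕ) := by simp [hy, hi]
          _ = x i := hnn1 i
      -- intersect over all depths
      have hanti : Directed (· ⊇ ·) (fun d => E d (fun i : Fin d => x i)) := by
        have hmono : ∀ d d' : ℕ, d ≤ d' →
            E d' (fun i : Fin d' => x i) ⊆ E d (fun i : Fin d => x i) := by
          intro d d' hdd z hz i
          exact hz ⟨i, lt_of_lt_of_le i.2 hdd⟩
        intro d d'
        exact ⟨max d d', hmono d _ (le_max_left _ _), hmono d' _ (le_max_right _ _)⟩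
      have hνinter : c ≤ ν (⋂ d, E d (fun i : Fin d => x i)) := by
        rw [Directed.measure_iInter (fun d => (hEmeas _ _).nullMeasurableSet) hanti
          ⟨0, measure_ne_top ν _⟩]
        exact le_iInf hdepth
      have hne : (⋂ d, E d (fun i : Fin d => x i)).Nonempty := by
        apply nonempty_of_measure_ne_zero (μ := ν)
        exact fun h => (hcpos.trans_le (h ▸ hνinter)).false
      obtain ⟨z, hz⟩ := hne
      have hzx : f z = x := by
        funext i
        have := (Set.mem_iInter.mp hz (i + 1))
        exact this ⟨i, Nat.lt_succ_self i⟩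
      have hsub : (⋂ d, E d (fun i : Fin d => x i)) ⊆ {z} := by
        intro w hw
        have hwx : f w = x := by
          funext i
          exact (Set.mem_iInter.mp hw (i + 1)) ⟨i, Nat.lt_succ_self i⟩
        have : f w = f z := by rw [hwx, hzx]
        simp [hfinj this]
      have : c ≤ ν {z} := le_trans hνinter (measure_mono hsub)
      rw [hνx z] at this
      exact absurd this (not_le_of_gt hcpos)
  -- now rewrite the set and prove measurability
  have hset : {μ : {ν : Measure X // IsProbabilityMeasure ν} |
      ∃ S : Set X, S.Countable ∧ (μ : Measure X) (Set.univ \ S) = 0} =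
      ⋂ k : ℕ, ⋃ m : ℕ, ⋂ j : ℕ, ⋃ T : Finset (Fin j → Bool), ⋃ _h : T.card ≤ m,
        {μ : {ν : Measure X // IsProbabilityMeasure ν} |
          1 - ((k : ℝ≥0∞) + 1)⁻¹ < (μ : Measure X) (⋃ b ∈ T, E j b)} := by
    ext μ
    simp only [Set.mem_setOf_eq, Set.mem_iInter, Set.mem_iUnion]
    rw [key μ μ.2]
    constructor
    · intro h k
      obtain ⟨m, hm⟩ := h k
      exact ⟨m, fun j => by obtain ⟨T, h1, h2⟩ := hm j; exact ⟨T, h1, h2⟩⟩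
    · intro h k
      obtain ⟨m, hm⟩ := h k
      exact ⟨m, fun j => by obtain ⟨T, h1, h2⟩ := hm j; exact ⟨T, h1, h2⟩⟩
  rw [hset]
  refine MeasurableSet.iInter fun k => MeasurableSet.iUnion fun m =>
    MeasurableSet.iInter fun j => MeasurableSet.iUnion fun T =>
    MeasurableSet.iUnion fun _ => ?_
  have hUm : MeasurableSet (⋃ b ∈ T, E j b) :=
    MeasurableSet.biUnion T.countable_toSet (fun b _ => hEmeas j b)
  have hmeas : Measurable fun μ : {ν : Measure X // IsProbabilityMeasure ν} =>
      (μ : Measure X) (⋃ b ∈ T, E j b) :=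
    (Measure.measurable_coe hUm).comp measurable_subtype_coe
  exact hmeas measurableSet_Ioi
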